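/- The map x₁(s,t) = (sin(s+t), sin s, sin t, -cos(s+t), cos s, cos t) : ℂ² → ℂ⁶ satisfies the Legendrian condition: x₁*(X₀dY₀ - Y₀dX₀ + X₁dY₁ - Y₁dX₁ + X₂dY₂ - Y₂dX₂) = 0 identically. Equivalently, ω(x₁, ∂x₁/∂s) = 0 and ω(x₁, ∂x₁/∂t) = 0 for all (s,t), where ω is the standard symplectic form on ℂ⁶. -/

import Mathlib

/-- Standard symplectic form `ω((X,Y),(X',Y')) = Σᵢ (XᵢY'ᵢ - YᵢX'ᵢ)` on
`ℂ⁶ = ℂ³ × ℂ³` (indices `0,1,2` the `X`'s and `3,4,5` the `Y`'s). -/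
noncomputable def omega (v w : Fin 6 → ℂ) : ℂ :=
  v 0 * w 3 - v 3 * w 0 + v 1 * w 4 - v 4 * w 1 + v 2 * w 5 - v 5 * w 2

/-- The tri-ruled surface parametrization
`x₁(s,t) = (sin(s+t), sin s, sin t, -cos(s+t), cos s, cos t)`. -/
noncomputable def x₁ : ℂ × ℂ → (Fin 6 → ℂ) := fun p =>
  ![Complex.sin (p.1 + p.2), Complex.sin p.1, Complex.sin p.2,
    -Complex.cos (p.1 + p.2), Complex.cos p.1, Complex.cos p.2]

lemma cons_val_five' {α : Type*} (x : α) (u : Fin 5 → α) : Matrix.vecCons x u 5 = u 4 := rfl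

open Complex ContinuousLinearMap in
noncomputable def x₁' (p : ℂ × ℂ) : (ℂ × ℂ) →L[ℂ] (Fin 6 → ℂ) :=
  ContinuousLinearMap.pi
    ![Complex.cos (p.1 + p.2) • (fst ℂ ℂ ℂ + snd ℂ ℂ ℂ),
      Complex.cos p.1 • fst ℂ ℂ ℂ,
      Complex.cos p.2 • snd ℂ ℂ ℂ,
      Complex.sin (p.1 + p.2) • (fst ℂ ℂ ℂ + snd ℂ ℂ ℂ),
      (-Complex.sin p.1) • fst ℂ ℂ ℂ,
      (-Complex.sin p.2) • snd ℂ ℂ ℂ]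

open Complex ContinuousLinearMap in
lemma x₁_hasFDerivAt (p : ℂ × ℂ) : HasFDerivAt x₁ (x₁' p) p := by
  have hadd : HasFDerivAt (fun q : ℂ × ℂ => q.1 + q.2) (fst ℂ ℂ ℂ + snd ℂ ℂ ℂ) p :=
    (hasFDerivAt_fst).add (hasFDerivAt_snd)
  rw [show x₁ = fun q : ℂ × ℂ => (fun i => ![Complex.sin (q.1 + q.2), Complex.sin q.1,
      Complex.sin q.2, -Complex.cos (q.1 + q.2), Complex.cos q.1, Complex.cos q.2] i) from rfl,
    x₁']
  apply hasFDerivAt_pi.2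
  intro i
  fin_cases i
  · exact (Complex.hasDerivAt_sin _).comp_hasFDerivAt p hadd
  · exact (Complex.hasDerivAt_sin p.1).comp_hasFDerivAt p hasFDerivAt_fst
  · exact (Complex.hasDerivAt_sin p.2).comp_hasFDerivAt p hasFDerivAt_snd
  · have := ((Complex.hasDerivAt_cos _).comp_hasFDerivAt p hadd).neg
    exact this.congr_fderiv (by simp [neg_smul, add_comm])
  · exact (Complex.hasDerivAt_cos p.1).comp_hasFDerivAt p hasFDerivAt_fst
  · exact (Complex.hasDerivAt_cos p.2).comp_hasFDerivAt p hasFDerivAt_snd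

/-- `x₁` satisfies the Legendrian condition:
`ω(x₁, ∂x₁/∂s) = 0` and `ω(x₁, ∂x₁/∂t) = 0` for all `(s,t)`. -/
theorem triRuled_legendrian (p : ℂ × ℂ) :
    omega (x₁ p) (fderiv ℂ x₁ p (1, 0)) = 0 ∧
      omega (x₁ p) (fderiv ℂ x₁ p (0, 1)) = 0 := by
  rw [(x₁_hasFDerivAt p).fderiv]
  constructor
  · simp [omega, x₁, x₁', ContinuousLinearMap.pi_apply, cons_val_five']
    linear_combination Complex.sin_sq_add_cos_sq (p.1 + p.2) - Complex.sin_sq_add_cos_sq p.1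
  · simp [omega, x₁, x₁', ContinuousLinearMap.pi_apply, cons_val_five']
    linear_combination Complex.sin_sq_add_cos_sq (p.1 + p.2) - Complex.sin_sq_add_cos_sq p.2
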